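/- Let N be a prime and p, q, r natural numbers greater than 1 with (q ∣ r or r ∣ q), (p ∣ r or r ∣ p), (q ∣ p or p ∣ q). Then the number of triples (x, y, z) ∈ (ℤ/Nℤ)³ with x^p + y^q ≡ z^r (mod N) and N ∣ x·y·z is at most 1 + (min(q,r) + min(p,r) + min(p,q))·(N − 1). -/

import Mathlib

open Finset

lemma fiber_count {F : Type*} [Field F] [Fintype F] [DecidableEq F] (a b : ℕ) (ha : 0 < a)
    (ε : F) :
    (univ.filter (fun yz : F × F => yz.1 ^ a = ε * yz.2 ^ b ∧ yz.1 ≠ 0 ∧ yz.2 ≠ 0)).card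
      ≤ a * (Fintype.card F - 1) := by
  classical
  set s := univ.filter (fun yz : F × F => yz.1 ^ a = ε * yz.2 ^ b ∧ yz.1 ≠ 0 ∧ yz.2 ≠ 0) with hs
  have h := Finset.card_le_mul_card_image (f := Prod.snd) s a ?_
  · refine h.trans ?_
    gcongr
    have hsub : s.image Prod.snd ⊆ univ.erase 0 := by
      intro z hz
      simp only [mem_image] at hz
      obtain ⟨yz, hyz, rfl⟩ := hz
      simp only [hs, mem_filter] at hyz
      simp [hyz.2.2.2]
    calc (s.image Prod.snd).card ≤ (univ.erase (0:F)).card := card_le_card hsub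
      _ = Fintype.card F - 1 := by simp
  · intro z hz
    have hsub : (s.filter fun x => Prod.snd x = z) ⊆
        ((Polynomial.nthRoots a (ε * z ^ b)).toFinset ×ˢ {z}) := by
      intro yz hyz
      simp only [mem_filter, hs] at hyz
      obtain ⟨⟨_, h1, _⟩, h2⟩ := hyz
      rw [mem_product]
      constructor
      · rw [Multiset.mem_toFinset, Polynomial.mem_nthRoots ha]
        rw [h1, h2]
      · simp [h2]
    calc (s.filter fun x => Prod.snd x = z).card
        ≤ ((Polynomial.nthRoots a (ε * z ^ b)).toFinset ×ˢ ({z} : Finset F)).card :=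
          card_le_card hsub
      _ = (Polynomial.nthRoots a (ε * z ^ b)).toFinset.card := by simp
      _ ≤ (Polynomial.nthRoots a (ε * z ^ b)).card := Multiset.toFinset_card_le _
      _ ≤ a := by simpa using Polynomial.card_nthRoots a (ε * z ^ b)

lemma pair_count {F : Type*} [Field F] [Fintype F] [DecidableEq F] (a b : ℕ) (ha : 0 < a)
    (hb : 0 < b) (ε : F) (hε : ε ≠ 0) :
    (univ.filter (fun yz : F × F => yz.1 ^ a = ε * yz.2 ^ b ∧ yz.1 ≠ 0 ∧ yz.2 ≠ 0)).card
      ≤ min a b * (Fintype.card F - 1) := by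
  rcases le_total a b with h | h
  · rw [min_eq_left h]; exact fiber_count a b ha ε
  · rw [min_eq_right h]
    have key : (univ.filter (fun yz : F × F => yz.1 ^ a = ε * yz.2 ^ b ∧ yz.1 ≠ 0 ∧ yz.2 ≠ 0)).card
        = (univ.filter (fun zy : F × F => zy.1 ^ b = ε⁻¹ * zy.2 ^ a ∧ zy.1 ≠ 0 ∧ zy.2 ≠ 0)).card := by
      apply Finset.card_nbij' (fun x => x.swap) (fun x => x.swap)
      · intro x hx
        simp only [mem_coe, mem_filter, mem_univ, true_and] at hx ⊢
        obtain ⟨h1, h2, h3⟩ := hx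
        refine ⟨?_, h3, h2⟩
        field_simp [Prod.swap] at h1 ⊢
        rw [Prod.fst_swap, Prod.snd_swap, h1]
      · intro x hx
        simp only [mem_coe, mem_filter, mem_univ, true_and] at hx ⊢
        obtain ⟨h1, h2, h3⟩ := hx
        refine ⟨?_, h3, h2⟩
        field_simp [Prod.swap] at h1 ⊢
        rw [Prod.fst_swap, Prod.snd_swap, ← h1]; ring
      · intro x _; simp
      · intro x _; simp
    rw [key]; exact fiber_count b a hb ε⁻¹


theorem stmt_15 (N : ℕ) (hN : N.Prime) (p q r : ℕ) (hp : 1 < p) (hq : 1 < q) (hr : 1 < r)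
    (h1 : q ∣ r ∨ r ∣ q) (h2 : p ∣ r ∨ r ∣ p) (h3 : q ∣ p ∨ p ∣ q) :
    Nat.card {xyz : ZMod N × ZMod N × ZMod N //
        xyz.1 ^ p + xyz.2.1 ^ q = xyz.2.2 ^ r ∧ xyz.1 * xyz.2.1 * xyz.2.2 = 0} ≤
      1 + (min q r + min p r + min p q) * (N - 1) := by
  classical
  haveI : Fact N.Prime := ⟨hN⟩
  set F := ZMod N
  have hp0 : 0 < p := by omega
  have hq0 : 0 < q := by omega
  have hr0 : 0 < r := by omega
  set S : Finset (F × F × F) := univ.filter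
    (fun xyz => xyz.1 ^ p + xyz.2.1 ^ q = xyz.2.2 ^ r ∧ xyz.1 * xyz.2.1 * xyz.2.2 = 0) with hS
  have hcard : Nat.card {xyz : F × F × F //
      xyz.1 ^ p + xyz.2.1 ^ q = xyz.2.2 ^ r ∧ xyz.1 * xyz.2.1 * xyz.2.2 = 0} = S.card := by
    rw [Nat.card_eq_fintype_card, Fintype.card_subtype]
  rw [hcard]
  set A : Finset (F × F) := univ.filter
    (fun yz : F × F => yz.1 ^ q = (1:F) * yz.2 ^ r ∧ yz.1 ≠ 0 ∧ yz.2 ≠ 0) with hA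
  set B : Finset (F × F) := univ.filter
    (fun xz : F × F => xz.1 ^ p = (1:F) * xz.2 ^ r ∧ xz.1 ≠ 0 ∧ xz.2 ≠ 0) with hB
  set C : Finset (F × F) := univ.filter
    (fun xy : F × F => xy.1 ^ p = (-1:F) * xy.2 ^ q ∧ xy.1 ≠ 0 ∧ xy.2 ≠ 0) with hC
  have hsub : S ⊆ insert ((0:F), (0:F), (0:F))
      ((A.image fun yz => ((0:F), yz.1, yz.2)) ∪ (B.image fun xz => (xz.1, (0:F), xz.2))
        ∪ (C.image fun xy => (xy.1, xy.2, (0:F)))) := by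
    rintro ⟨x, y, z⟩ hx
    simp only [hS, mem_filter, mem_univ, true_and] at hx
    obtain ⟨heq, hmul⟩ := hx
    simp only [hA, hB, hC, mem_insert, mem_union, mem_image, mem_filter, mem_univ, true_and,
      Prod.mk.injEq]
    rcases mul_eq_zero.1 hmul with hxy | hz
    · rcases mul_eq_zero.1 hxy with hx0 | hy0
      · subst hx0
        rw [zero_pow hp0.ne', zero_add] at heq
        by_cases hy : y = 0
        · subst hy
          rw [zero_pow hq0.ne'] at heq
          have hz : z = 0 := by
            have := pow_eq_zero_iff hr0.ne' |>.1 heq.symm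
            exact this
          subst hz; left; exact ⟨rfl, rfl, rfl⟩
        · have hz : z ≠ 0 := by
            intro h; subst h; rw [zero_pow hr0.ne'] at heq
            exact hy (pow_eq_zero_iff hq0.ne' |>.1 heq)
          right; left; left
          exact ⟨(y, z), ⟨by rw [one_mul]; exact heq, hy, hz⟩, rfl, rfl, rfl⟩
      · subst hy0
        rw [zero_pow hq0.ne', add_zero] at heq
        by_cases hx : x = 0
        · subst hx
          rw [zero_pow hp0.ne'] at heq
          have hz : z = 0 := pow_eq_zero_iff hr0.ne' |>.1 heq.symm
          subst hz; left; exact ⟨rfl, rfl, rfl⟩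
        · have hz : z ≠ 0 := by
            intro h; subst h; rw [zero_pow hr0.ne'] at heq
            exact hx (pow_eq_zero_iff hp0.ne' |>.1 heq)
          right; left; right
          exact ⟨(x, z), ⟨by rw [one_mul]; exact heq, hx, hz⟩, rfl, rfl, rfl⟩
    · subst hz
      rw [zero_pow hr0.ne'] at heq
      by_cases hx : x = 0
      · subst hx
        rw [zero_pow hp0.ne', zero_add] at heq
        have hy : y = 0 := pow_eq_zero_iff hq0.ne' |>.1 heq
        subst hy; left; exact ⟨rfl, rfl, rfl⟩
      · have hy : y ≠ 0 := by
          intro h; subst h; rw [zero_pow hq0.ne', add_zero] at heq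
          exact hx (pow_eq_zero_iff hp0.ne' |>.1 heq)
        right; right
        refine ⟨(x, y), ⟨?_, hx, hy⟩, rfl, rfl, rfl⟩
        have : x ^ p = - y ^ q := by linear_combination heq
        rw [this]; ring
  have hNcard : Fintype.card F - 1 = N - 1 := by rw [ZMod.card]
  have hAle : A.card ≤ min q r * (N - 1) := by
    rw [← hNcard]; exact pair_count q r hq0 hr0 1 one_ne_zero
  have hBle : B.card ≤ min p r * (N - 1) := by
    rw [← hNcard]; exact pair_count p r hp0 hr0 1 one_ne_zero
  have hCle : C.card ≤ min p q * (N - 1) := by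
    rw [← hNcard]
    exact pair_count p q hp0 hq0 (-1) (by simp)
  calc S.card ≤ _ := card_le_card hsub
    _ ≤ 1 + ((A.image fun yz => ((0:F), yz.1, yz.2)) ∪ (B.image fun xz => (xz.1, (0:F), xz.2))
        ∪ (C.image fun xy => (xy.1, xy.2, (0:F)))).card := by
      have := card_insert_le ((0:F), (0:F), (0:F))
        ((A.image fun yz => ((0:F), yz.1, yz.2)) ∪ (B.image fun xz => (xz.1, (0:F), xz.2))
          ∪ (C.image fun xy => (xy.1, xy.2, (0:F))))
      omega
    _ ≤ 1 + (A.card + B.card + C.card) := by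
      have h1 := card_union_le ((A.image fun yz => ((0:F), yz.1, yz.2)) ∪
        (B.image fun xz => (xz.1, (0:F), xz.2))) (C.image fun xy => (xy.1, xy.2, (0:F)))
      have h2 := card_union_le (A.image fun yz => ((0:F), yz.1, yz.2))
        (B.image fun xz => (xz.1, (0:F), xz.2))
      have h3 := card_image_le (s := A) (f := fun yz => ((0:F), yz.1, yz.2))
      have h4 := card_image_le (s := B) (f := fun xz => (xz.1, (0:F), xz.2))
      have h5 := card_image_le (s := C) (f := fun xy => (xy.1, xy.2, (0:F)))
      omega
    _ ≤ 1 + (min q r + min p r + min p q) * (N - 1) := by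
      rw [add_mul, add_mul]; omega
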